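/- Let θ ∈ (0,1) and let α be a complex number with Re(α) > θ + 1. Then ∫_0^∞ (cosh u)^{−α} · sinh(θu) · sinh(u) du = θ · 2^{α−3} · Γ((α+θ−1)/2) · Γ((α−θ−1)/2) / Γ(α), where (cosh u)^{−α} := exp(−α·log(cosh u)) and the integral converges absolutely. -/

import Mathlib

open Real MeasureTheory Filter Topology
open Set

open Complex in
lemma key_exp (α th A B c : ℂ) (hc : Complex.exp c = 2) :
  exp (-α * (-(A+B)/2 - c)) * ((exp (th*((B-A)/2)) - exp (-(th*((B-A)/2))))/2) *
      ((exp ((B-A)/2) - exp (-((B-A)/2)))/2)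
  = (2 * (exp A * exp B)) * (exp ((α-3)*c) *
      (exp (A * ((α - th - 1)/2 - 1)) * exp (B * ((α + th + 1)/2 - 1))
     + exp (A * ((α + th + 1)/2 - 1)) * exp (B * ((α - th - 1)/2 - 1))
     - exp (A * ((α + th - 1)/2 - 1)) * exp (B * ((α - th + 1)/2 - 1))
     - exp (A * ((α - th + 1)/2 - 1)) * exp (B * ((α + th - 1)/2 - 1)))) := by
  have h8 : exp ((α-3)*c) = exp (α*c) * 8⁻¹ := by
    rw [show (α-3)*c = α*c - (c + c + c) by ring, Complex.exp_sub, Complex.exp_add,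
      Complex.exp_add, hc]
    norm_num; ring
  rw [h8]
  simp only [mul_sub, sub_mul, mul_add, add_mul, div_sub_div_same, ← Complex.exp_add,
    mul_div_assoc]
  ring_nf
  simp only [← Complex.exp_add]
  ring_nf

lemma key_pointwise (θ : ℝ) (α : ℂ) {t : ℝ} (ht0 : 0 < t) (ht1 : t < 1) :
    Complex.exp (-α * (Real.log (Real.cosh ((Real.log (1-t) - Real.log t)/2)) : ℂ)) *
      ((Real.sinh (θ * ((Real.log (1-t) - Real.log t)/2)) : ℝ) : ℂ) *
      ((Real.sinh ((Real.log (1-t) - Real.log t)/2) : ℝ) : ℂ)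
    = ((2*t*(1-t) : ℝ) : ℂ) *
      (Complex.exp ((α-3) * (Real.log 2 : ℂ)) *
        ((t:ℂ)^((α - θ - 1)/2 - 1) * (1-(t:ℂ))^((α + θ + 1)/2 - 1)
       + (t:ℂ)^((α + θ + 1)/2 - 1) * (1-(t:ℂ))^((α - θ - 1)/2 - 1)
       - (t:ℂ)^((α + θ - 1)/2 - 1) * (1-(t:ℂ))^((α - θ + 1)/2 - 1)
       - (t:ℂ)^((α - θ + 1)/2 - 1) * (1-(t:ℂ))^((α + θ - 1)/2 - 1))) := by
  have ht1' : (0:ℝ) < 1 - t := by linarith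
  set a := Real.log t with ha
  set b := Real.log (1-t) with hb
  have hea : Real.exp a = t := Real.exp_log ht0
  have heb : Real.exp b = 1 - t := Real.exp_log ht1'
  have h1 : Real.cosh ((b-a)/2) = Real.exp (-(a+b)/2) / 2 := by
    rw [Real.cosh_eq]
    have e1 : Real.exp ((b-a)/2) = Real.exp (-(a+b)/2) * (1-t) := by
      rw [← heb, ← Real.exp_add]; ring_nf
    have e2 : Real.exp (-((b-a)/2)) = Real.exp (-(a+b)/2) * t := by
      rw [← hea, ← Real.exp_add]; ring_nf
    rw [e1, e2]; ring
  have h2 : Real.log (Real.cosh ((b-a)/2)) = -(a+b)/2 - Real.log 2 := by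
    rw [h1, Real.log_div (Real.exp_ne_zero _) two_ne_zero, Real.log_exp]
  have hca : ∀ w : ℂ, (t:ℂ)^w = Complex.exp ((a:ℂ) * w) := by
    intro w
    rw [Complex.cpow_def_of_ne_zero (by exact_mod_cast ht0.ne'),
      ← Complex.ofReal_log ht0.le]
  have hcb : ∀ w : ℂ, (1-(t:ℂ))^w = Complex.exp ((b:ℂ) * w) := by
    intro w
    have : (1 - (t:ℂ)) = ((1-t : ℝ) : ℂ) := by push_cast; ring
    rw [this, Complex.cpow_def_of_ne_zero (by exact_mod_cast ht1'.ne'),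
      ← Complex.ofReal_log ht1'.le]
  have hc : Complex.exp ((Real.log 2 : ℝ) : ℂ) = 2 := by
    rw [← Complex.ofReal_exp, Real.exp_log two_pos]; norm_num
  have het : (t : ℂ) = Complex.exp (a:ℂ) := by
    rw [← Complex.ofReal_exp, hea]
  have het' : ((1 - t : ℝ) : ℂ) = Complex.exp (b:ℂ) := by
    rw [← Complex.ofReal_exp, heb]
  rw [h2, hca, hca, hca, hca, hcb, hcb, hcb, hcb, Real.sinh_eq, Real.sinh_eq]
  push_cast
  rw [show (1 - (t:ℂ)) = Complex.exp (b:ℂ) by rw [← het']; push_cast; ring]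
  rw [show ((t:ℂ)) = Complex.exp (a:ℂ) from het]
  have := key_exp α (θ:ℂ) (a:ℂ) (b:ℂ) ((Real.log 2 : ℝ):ℂ) hc
  convert this using 2 <;> ring

lemma re_div_two (z : ℂ) : (z/2).re = z.re/2 := by
  rw [show (2:ℂ) = ((2:ℝ):ℂ) by norm_num, Complex.div_ofReal_re]


/-- The key integral evaluation:
  ∫_0^∞ (cosh u)^{−α} sinh(θu) sinh(u) du
    = θ · 2^{α−3} · Γ((α+θ−1)/2)·Γ((α−θ−1)/2) / Γ(α)
for θ ∈ (0,1) and Re(α) > θ + 1, where (cosh u)^{−α} := exp(−α·log(cosh u)) and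
2^{z} := exp(z·log 2), with absolute convergence of the integral. -/
theorem cosh_sinh_beta_integral (θ : ℝ) (hθ : θ ∈ Set.Ioo (0 : ℝ) 1)
    (α : ℂ) (hα : θ + 1 < α.re) :
    MeasureTheory.IntegrableOn
      (fun u : ℝ =>
        Complex.exp (-α * (Real.log (Real.cosh u) : ℂ)) *
          ((Real.sinh (θ * u) : ℝ) : ℂ) * ((Real.sinh u : ℝ) : ℂ))
      (Set.Ioi 0) ∧
    ∫ u in Set.Ioi (0 : ℝ),
        Complex.exp (-α * (Real.log (Real.cosh u) : ℂ)) *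
          ((Real.sinh (θ * u) : ℝ) : ℂ) * ((Real.sinh u : ℝ) : ℂ) =
      (θ : ℂ) * Complex.exp ((α - 3) * (Real.log 2 : ℂ)) *
        Complex.Gamma ((α + (θ : ℂ) - 1) / 2) * Complex.Gamma ((α - (θ : ℂ) - 1) / 2) /
        Complex.Gamma α := by
  obtain ⟨hθ0, hθ1⟩ := hθ
  set f : ℝ → ℂ := fun u =>
    Complex.exp (-α * (Real.log (Real.cosh u) : ℂ)) *
      ((Real.sinh (θ * u) : ℝ) : ℂ) * ((Real.sinh u : ℝ) : ℂ) with hf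
  set p : ℂ := (α - θ - 1)/2 with hp
  set q : ℂ := (α + θ + 1)/2 with hq
  set p' : ℂ := (α + θ - 1)/2 with hp'
  set q' : ℂ := (α - θ + 1)/2 with hq'
  have hre : ∀ x : ℝ, ((α + (x:ℂ))/2).re = (α.re + x)/2 := by
    intro x; rw [re_div_two]; simp
  have hpre : 0 < p.re := by
    have := hre (-θ-1); rw [show (α + ((-θ-1:ℝ):ℂ))/2 = p by push_cast; ring] at this
    rw [this]; linarith
  have hqre : 0 < q.re := by
    have := hre (θ+1); rw [show (α + ((θ+1:ℝ):ℂ))/2 = q by push_cast; ring] at this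
    rw [this]; linarith
  have hp're : 0 < p'.re := by
    have := hre (θ-1); rw [show (α + ((θ-1:ℝ):ℂ))/2 = p' by push_cast; ring] at this
    rw [this]; linarith
  have hq're : 0 < q'.re := by
    have := hre (-θ+1); rw [show (α + ((-θ+1:ℝ):ℂ))/2 = q' by push_cast; ring] at this
    rw [this]; linarith
  have hαre : 0 < α.re := by linarith
  -- the Beta-type integrand on (0,1)
  set C : ℂ := Complex.exp ((α-3) * (Real.log 2 : ℂ)) with hC
  set T : ℂ → ℂ → ℝ → ℂ := fun u v t => (t:ℂ)^(u-1) * (1-(t:ℂ))^(v-1) with hT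
  set G : ℝ → ℂ := fun t => C * (T p q t + T q p t - T p' q' t - T q' p' t) with hG
  -- integrability of the T's on Ioo 0 1
  have hTint : ∀ u v : ℂ, 0 < u.re → 0 < v.re → IntegrableOn (T u v) (Ioo 0 1) := by
    intro u v hu hv
    have := (Complex.betaIntegral_convergent hu hv)
    rw [intervalIntegrable_iff_integrableOn_Ioc_of_le zero_le_one] at this
    exact this.mono_set Ioo_subset_Ioc_self
  have hGint : IntegrableOn G (Ioo 0 1) := by
    exact ((((hTint p q hpre hqre).add (hTint q p hqre hpre)).sub
      (hTint p' q' hp're hq're)).sub (hTint q' p' hq're hp're)).const_mul C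
  -- the change of variables
  set φ : ℝ → ℝ := fun t => (Real.log (1-t) - Real.log t)/2 with hφ
  have hφd : ∀ t ∈ Ioo (0:ℝ) 1, HasDerivWithinAt φ (-(1/(2*t*(1-t)))) (Ioo 0 1) t := by
    rintro t ⟨ht0, ht1⟩
    have ht1' : (0:ℝ) < 1 - t := by linarith
    have d1 : HasDerivAt (fun s : ℝ => 1 - s) (-1) t := by
      simpa using (hasDerivAt_id t).const_sub 1
    have d2 : HasDerivAt (fun s : ℝ => Real.log (1-s)) (-1/(1-t)) t := d1.log ht1'.ne'
    have d3 : HasDerivAt Real.log t⁻¹ t := Real.hasDerivAt_log ht0.ne'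
    have d4 := (d2.sub d3).div_const 2
    have : (-1/(1-t) - t⁻¹)/2 = -(1/(2*t*(1-t))) := by field_simp; ring
    rw [this] at d4
    exact d4.hasDerivWithinAt
  have hφinj : InjOn φ (Ioo 0 1) := by
    have : StrictAntiOn φ (Ioo 0 1) := by
      rintro x ⟨hx0, hx1⟩ y ⟨hy0, hy1⟩ hxy
      have h1 : Real.log x < Real.log y := Real.log_lt_log hx0 hxy
      have h2 : Real.log (1-y) < Real.log (1-x) := Real.log_lt_log (by linarith) (by linarith)
      simp only [hφ]
      linarith
    exact this.injOn
  have hφimg : φ '' (Ioo 0 1) = univ := by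
    apply eq_univ_of_forall
    intro u
    refine ⟨1/(1 + Real.exp (2*u)), ⟨by positivity, ?_⟩, ?_⟩
    · rw [div_lt_one (by positivity)]
      have := Real.exp_pos (2*u); linarith
    · have hd : (0:ℝ) < 1 + Real.exp (2*u) := by positivity
      have h1t : 1 - 1/(1 + Real.exp (2*u)) = Real.exp (2*u)/(1 + Real.exp (2*u)) := by
        field_simp
        ring
      simp only [hφ, h1t]
      rw [Real.log_div (Real.exp_ne_zero _) hd.ne', Real.log_exp,
        Real.log_div one_ne_zero hd.ne', Real.log_one]
      ring
  -- pointwise identity : |φ'| • f ∘ φ = G on Ioo 0 1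
  have hpt : ∀ t ∈ Ioo (0:ℝ) 1, |(-(1/(2*t*(1-t))))| • f (φ t) = G t := by
    rintro t ⟨ht0, ht1⟩
    have ht1' : (0:ℝ) < 1 - t := by linarith
    have habs : |(-(1/(2*t*(1-t))))| = 1/(2*t*(1-t)) := by
      rw [abs_neg, abs_of_pos (by positivity)]
    rw [habs]
    have := key_pointwise θ α ht0 ht1
    simp only [hf, hφ, hG, hT, hC]
    rw [this, Complex.real_smul]
    push_cast
    have hne : (2*(t:ℂ)*(1-(t:ℂ))) ≠ 0 := by
      have h2 : (t:ℂ) ≠ 0 := by exact_mod_cast ht0.ne'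
      have h3 : (1-(t:ℂ)) ≠ 0 := by
        rw [show (1-(t:ℂ)) = ((1-t:ℝ):ℂ) by push_cast; ring]
        exact_mod_cast ht1'.ne'
      simp [h2, h3]
    rw [← mul_assoc, one_div_mul_cancel hne, one_mul]
  -- integrability of f
  have hfint : Integrable f := by
    rw [← integrableOn_univ, ← hφimg,
      integrableOn_image_iff_integrableOn_abs_deriv_smul measurableSet_Ioo hφd hφinj f]
    exact hGint.congr_fun (fun t ht => (hpt t ht).symm) measurableSet_Ioo
  have hIoi : IntegrableOn f (Ioi 0) := hfint.integrableOn
  refine ⟨hIoi, ?_⟩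
  -- evenness
  have heven : ∀ u : ℝ, f (-u) = f u := by
    intro u
    simp only [hf, Real.cosh_neg, mul_neg, Real.sinh_neg]
    push_cast
    ring
  have hsplit : (∫ u in Iic (0:ℝ), f u) + (∫ u in Ioi (0:ℝ), f u) = ∫ u, f u :=
    intervalIntegral.integral_Iic_add_Ioi hfint.integrableOn hIoi
  have hIic : (∫ u in Iic (0:ℝ), f u) = ∫ u in Ioi (0:ℝ), f u := by
    rw [show (∫ u in Iic (0:ℝ), f u) = ∫ u in Iic (0:ℝ), f (-u) by
      exact setIntegral_congr_fun measurableSet_Iic (fun x _ => (heven x).symm),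
      integral_comp_neg_Iic, neg_zero]
  -- value of the full integral
  have hval : ∫ u, f u = ∫ t in Ioo (0:ℝ) 1, G t := by
    rw [← setIntegral_univ, ← hφimg,
      integral_image_eq_integral_abs_deriv_smul measurableSet_Ioo hφd hφinj f]
    exact setIntegral_congr_fun measurableSet_Ioo hpt
  -- Beta values
  have hTval : ∀ u v : ℂ, 0 < u.re → 0 < v.re →
      ∫ t in Ioo (0:ℝ) 1, T u v t = Complex.Gamma u * Complex.Gamma v / Complex.Gamma (u+v) := by
    intro u v hu hv
    have h1 : ∫ t in Ioo (0:ℝ) 1, T u v t = Complex.betaIntegral u v := by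
      rw [Complex.betaIntegral, intervalIntegral.integral_of_le zero_le_one,
        integral_Ioc_eq_integral_Ioo]
    have h2 := Complex.Gamma_mul_Gamma_eq_betaIntegral hu hv
    have h3 : Complex.Gamma (u+v) ≠ 0 :=
      Complex.Gamma_ne_zero_of_re_pos (by rw [Complex.add_re]; positivity)
    rw [h1, eq_div_iff h3, mul_comm _ (Complex.Gamma (u+v)), ← h2]
  have hGval : ∫ t in Ioo (0:ℝ) 1, G t =
      C * (Complex.Gamma p * Complex.Gamma q / Complex.Gamma α
         + Complex.Gamma q * Complex.Gamma p / Complex.Gamma α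
         - Complex.Gamma p' * Complex.Gamma q' / Complex.Gamma α
         - Complex.Gamma q' * Complex.Gamma p' / Complex.Gamma α) := by
    simp only [hG]
    rw [integral_const_mul]
    congr 1
    rw [integral_sub, integral_sub, integral_add]
    · rw [hTval p q hpre hqre, hTval q p hqre hpre, hTval p' q' hp're hq're,
        hTval q' p' hq're hp're,
        show p + q = α by rw [hp, hq]; ring, show q + p = α by rw [hp, hq]; ring,
        show p' + q' = α by rw [hp', hq']; ring, show q' + p' = α by rw [hp', hq']; ring]
    · exact hTint p q hpre hqre
    · exact hTint q p hqre hpre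
    · exact (hTint p q hpre hqre).add (hTint q p hqre hpre)
    · exact hTint p' q' hp're hq're
    · exact ((hTint p q hpre hqre).add (hTint q p hqre hpre)).sub (hTint p' q' hp're hq're)
    · exact hTint q' p' hq're hp're
  -- assemble
  have h2I : (2:ℂ) * ∫ u in Ioi (0:ℝ), f u = ∫ t in Ioo (0:ℝ) 1, G t := by
    rw [← hval, ← hsplit, hIic]; ring
  have hΓq : Complex.Gamma q = p' * Complex.Gamma p' := by
    rw [show q = p' + 1 by rw [hp', hq]; ring]
    exact Complex.Gamma_add_one p' (fun h => by rw [h] at hp're; simp at hp're)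
  have hΓq' : Complex.Gamma q' = p * Complex.Gamma p := by
    rw [show q' = p + 1 by rw [hp, hq']; ring]
    exact Complex.Gamma_add_one p (fun h => by rw [h] at hpre; simp at hpre)
  have hI : ∫ u in Ioi (0:ℝ), f u = (∫ t in Ioo (0:ℝ) 1, G t)/2 := by
    rw [← h2I]; ring
  rw [hI, hGval, hΓq, hΓq', show ((θ:ℂ)) = p' - p by rw [hp, hp']; ring]
  ring
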